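/- Let E be a Riesz space, let p, q : ℕ → ℕ satisfy the deferred property, and let (z_n) and (w_n) be sequences with z_n ↓^{D_{st_o}}_{p,q} 0 and w_n ↓^{D_{st_o}}_{p,q} 0. If δ_{p,q}({n ∈ ℕ : z_n ≠ w_n}) = 0, then C^{p,q}_{(z_n)} = C^{p,q}_{(w_n)}. -/

import Mathlib

open Filter Topology

variable {E : Type*} [AddCommGroup E] [Lattice E]
  [CovariantClass E E (· + ·) (· ≤ ·)] [Module ℝ E] [PosSMulMono ℝ E]

/-- `p` and `q` satisfy the deferred property: `p n < q n` for all `n` and `q n → ∞`. -/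
def DeferredProperty (p q : ℕ → ℕ) : Prop :=
  (∀ n, p n < q n) ∧ Tendsto q atTop atTop

open Classical in
/-- The ratio `|{k ∈ K : p n < k ≤ q n}| / (q n - p n)`. -/
noncomputable def deferredRatio (p q : ℕ → ℕ) (K : Set ℕ) (n : ℕ) : ℝ :=
  (((Finset.Ioc (p n) (q n)).filter (fun k => k ∈ K)).card : ℝ) / ((q n : ℝ) - (p n : ℝ))

/-- The deferred density of `K ⊆ ℕ` is `a`. -/
def DeferredDensity (p q : ℕ → ℕ) (K : Set ℕ) (a : ℝ) : Prop :=
  Tendsto (deferredRatio p q K) atTop (nhds a)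

/-- `z` is deferred statistical order decreasing to `0`: there is an (infinite) set
`K = {k₁ < k₂ < ⋯}` of deferred density one along which `z` is decreasing with infimum `0`. -/
def DStatDecreasing (p q : ℕ → ℕ) (z : ℕ → E) : Prop :=
  ∃ K : Set ℕ, K.Infinite ∧ DeferredDensity p q K 1 ∧
    (∀ i ∈ K, ∀ j ∈ K, i ≤ j → z j ≤ z i) ∧ IsGLB (z '' K) 0

/-- `x` is deferred statistical order convergent to `l`. -/
def DStatOrderConv (p q : ℕ → ℕ) (x : ℕ → E) (l : E) : Prop :=
  ∃ z : ℕ → E, DStatDecreasing p q z ∧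
    ∃ K : Set ℕ, K.Infinite ∧ DeferredDensity p q K 1 ∧ ∀ k ∈ K, |x k - l| ≤ z k

/-- The class `C^{p,q}_{(z_n)}` of all sequences deferred statistically order convergent
with dominating sequence `z`. -/
def CClass (p q : ℕ → ℕ) (z : ℕ → E) : Set (ℕ → E) :=
  {x | ∃ l : E, ∃ K : Set ℕ, DeferredDensity p q K 1 ∧ ∀ k ∈ K, |x k - l| ≤ z k}

lemma card_filter_congr {s : Finset ℕ} (P Q : ℕ → Prop) (hPQ : ∀ k, P k ↔ Q k)
    (h1 : DecidablePred P) (h2 : DecidablePred Q) :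
    (@Finset.filter ℕ P h1 s).card = (@Finset.filter ℕ Q h2 s).card := by
  have hP : P = Q := funext fun k => propext (hPQ k)
  subst hP
  have h12 : h1 = h2 := funext fun k => Subsingleton.elim _ _
  subst h12
  rfl

lemma ratio_compl_eq (p q : ℕ → ℕ) (hpq : ∀ n, p n < q n) (A : Set ℕ) (n : ℕ) :
    deferredRatio p q Aᶜ n = 1 - deferredRatio p q A n := by
  unfold deferredRatio
  rw [card_filter_congr (fun k => k ∈ Aᶜ) (fun k => ¬ k ∈ A) (fun _ => Iff.rfl)
        _ (Classical.decPred _),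
      card_filter_congr (fun k => k ∈ A) (fun k => k ∈ A) (fun _ => Iff.rfl)
        _ (Classical.decPred _)]
  have hd : (0:ℝ) < (q n : ℝ) - (p n : ℝ) := by
    have h := hpq n
    have : (p n : ℝ) < q n := by exact_mod_cast h
    linarith
  have hcard : (@Finset.filter ℕ (fun k => k ∈ A) (Classical.decPred _)
        (Finset.Ioc (p n) (q n))).card
      + (@Finset.filter ℕ (fun k => ¬ k ∈ A) (Classical.decPred _)
        (Finset.Ioc (p n) (q n))).card
      = (Finset.Ioc (p n) (q n)).card :=
    @Finset.card_filter_add_card_filter_not ℕ (Finset.Ioc (p n) (q n))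
      (fun k => k ∈ A) (Classical.decPred _) (Classical.decPred _)
  have hIoc : ((Finset.Ioc (p n) (q n)).card : ℝ) = (q n : ℝ) - (p n : ℝ) := by
    rw [Nat.card_Ioc]
    push_cast [Nat.cast_sub (hpq n).le]
    ring
  have h3 := congrArg (Nat.cast : ℕ → ℝ) hcard
  push_cast at h3
  field_simp
  linarith

lemma density_inter (p q : ℕ → ℕ) (hpq : DeferredProperty p q) {A B : Set ℕ}
    (hA : DeferredDensity p q A 1) (hB : DeferredDensity p q B 1) :
    DeferredDensity p q (A ∩ B) 1 := by
  have hlow : Tendsto (fun n => deferredRatio p q A n + deferredRatio p q B n - 1)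
      atTop (nhds 1) := by
    have := (hA.add hB).sub_const 1
    simpa using this
  refine tendsto_of_tendsto_of_tendsto_of_le_of_le hlow hA ?_ ?_
  all_goals intro n
  all_goals dsimp only
  all_goals unfold deferredRatio
  all_goals rw [card_filter_congr (fun k => k ∈ A ∩ B) (fun k => k ∈ A ∧ k ∈ B)
      (fun _ => Iff.rfl) _ (Classical.decPred _)]
  all_goals have hd : (0:ℝ) < (q n : ℝ) - (p n : ℝ) :=
    sub_pos.mpr (by exact_mod_cast hpq.1 n)
  · rw [card_filter_congr (fun k => k ∈ A) (fun k => k ∈ A) (fun _ => Iff.rfl)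
          _ (Classical.decPred _),
        card_filter_congr (fun k => k ∈ B) (fun k => k ∈ B) (fun _ => Iff.rfl)
          _ (Classical.decPred _)]
    have hIoc : ((Finset.Ioc (p n) (q n)).card : ℝ) = (q n : ℝ) - (p n : ℝ) := by
      rw [Nat.card_Ioc]
      push_cast [Nat.cast_sub (hpq.1 n).le]
      ring
    have h1 : (@Finset.filter ℕ (fun k => k ∈ A ∧ k ∈ B) (Classical.decPred _)
          (Finset.Ioc (p n) (q n)))
        = (@Finset.filter ℕ (fun k => k ∈ A) (Classical.decPred _)
            (Finset.Ioc (p n) (q n)))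
          ∩ (@Finset.filter ℕ (fun k => k ∈ B) (Classical.decPred _)
            (Finset.Ioc (p n) (q n))) := by
      ext k
      simp only [Finset.mem_filter, Finset.mem_inter]
      tauto
    have h2 : ((@Finset.filter ℕ (fun k => k ∈ A) (Classical.decPred _)
            (Finset.Ioc (p n) (q n)))
          ∪ (@Finset.filter ℕ (fun k => k ∈ B) (Classical.decPred _)
            (Finset.Ioc (p n) (q n)))).card
        ≤ (Finset.Ioc (p n) (q n)).card :=
      Finset.card_le_card (Finset.union_subset
        (@Finset.filter_subset ℕ (fun k => k ∈ A) (Classical.decPred _)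
          (Finset.Ioc (p n) (q n)))
        (@Finset.filter_subset ℕ (fun k => k ∈ B) (Classical.decPred _)
          (Finset.Ioc (p n) (q n))))
    have h3 := Finset.card_inter_add_card_union
      (@Finset.filter ℕ (fun k => k ∈ A) (Classical.decPred _)
        (Finset.Ioc (p n) (q n)))
      (@Finset.filter ℕ (fun k => k ∈ B) (Classical.decPred _)
        (Finset.Ioc (p n) (q n)))
    rw [h1]
    have h2' := (Nat.cast_le (α := ℝ)).mpr h2
    have h3' := congrArg (Nat.cast : ℕ → ℝ) h3
    push_cast at h2' h3'
    rw [← add_div, div_sub' hd.ne', div_le_div_iff_of_pos_right hd]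
    push_cast
    linarith
  · rw [card_filter_congr (fun k => k ∈ A) (fun k => k ∈ A) (fun _ => Iff.rfl)
        _ (Classical.decPred _)]
    rw [div_le_div_iff_of_pos_right hd]
    have hsub : (@Finset.filter ℕ (fun k => k ∈ A ∧ k ∈ B) (Classical.decPred _)
          (Finset.Ioc (p n) (q n)))
        ⊆ (@Finset.filter ℕ (fun k => k ∈ A) (Classical.decPred _)
          (Finset.Ioc (p n) (q n))) := by
      intro k hk
      simp only [Finset.mem_filter] at hk ⊢
      exact ⟨hk.1, hk.2.1⟩
    exact Nat.cast_le.mpr (Finset.card_le_card hsub)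

lemma cclass_subset (p q : ℕ → ℕ) (hpq : DeferredProperty p q) (z w : ℕ → E)
    (hzw : DeferredDensity p q {n | z n ≠ w n} 0) :
    CClass p q z ⊆ CClass p q w := by
  intro x hx
  obtain ⟨l, K, hK1, hKb⟩ := hx
  have hS : DeferredDensity p q {n | z n ≠ w n}ᶜ 1 := by
    unfold DeferredDensity
    have h := (tendsto_const_nhds (x := (1:ℝ))).sub hzw
    simp only [sub_zero] at h
    exact h.congr (fun n => (ratio_compl_eq p q hpq.1 _ n).symm)
  refine ⟨l, K ∩ {n | z n ≠ w n}ᶜ, density_inter p q hpq hK1 hS, ?_⟩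
  rintro k ⟨hk1, hk2⟩
  have hzwk : z k = w k := by
    by_contra h
    exact hk2 h
  rw [← hzwk]
  exact hKb k hk1

theorem stmt18 (p q : ℕ → ℕ) (hpq : DeferredProperty p q) (z w : ℕ → E)
    (hz : DStatDecreasing p q z) (hw : DStatDecreasing p q w)
    (hzw : DeferredDensity p q {n | z n ≠ w n} 0) :
    CClass p q z = CClass p q w := by
  have hzw' : DeferredDensity p q {n | w n ≠ z n} 0 := by
    have h : {n | w n ≠ z n} = {n | z n ≠ w n} := by
      ext n; simp [ne_comm]
    rw [h]
    exact hzw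
  exact Set.Subset.antisymm (cclass_subset p q hpq z w hzw)
    (cclass_subset p q hpq w z hzw')
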